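/- Let Λ, β, α, μ₁, μ₂, d₂ > 0, θ ∈ ℝ, S₀ = Λ/μ₁, c > 0. Suppose S, I : ℝ → ℝ with I continuously differentiable, I(ξ) > 0 and S(ξ) > 0 for all ξ, I bounded on ℝ, and I satisfies cI'(ξ) = d₂𝔍[I](ξ) + βS(ξ)I(ξ)/(1 + αI(ξ)) − μ₂I(ξ) for all ξ ∈ ℝ. Assume there is μ₀ > 0 with sup_{ξ∈ℝ} e^{−μ₀ξ}I(ξ) < ∞ and sup_{ξ∈ℝ} e^{−μ₀ξ}|I'(ξ)| < ∞. Then for every real λ with 0 < λ < μ₀, the two-sided Laplace transform 𝓛(λ) = ∫_{−∞}^{+∞} e^{−λξ} I(ξ) dξ converges, the integral on the right below converges, and Δ_c(λ)·𝓛(λ) = ∫_{−∞}^{+∞} e^{−λξ} [βS₀I(ξ) − βS(ξ)I(ξ)/(1 + αI(ξ))] dξ, where Δ_c(λ) = d₂(e^{λ sin θ} + e^{−λ sin θ} + e^{λ cos θ} + e^{−λ cos θ} − 4) − cλ + βS₀ − μ₂. -/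

import Mathlib

open MeasureTheory Real Set Filter

noncomputable def charDelta (d₂ β S₀ μ₂ θ c lam : ℝ) : ℝ :=
  d₂ * (Real.exp (lam * Real.sin θ) + Real.exp (-(lam * Real.sin θ)) +
        Real.exp (lam * Real.cos θ) + Real.exp (-(lam * Real.cos θ)) - 4) -
  c * lam + β * S₀ - μ₂

/-- Discrete Laplacian in direction `θ`. -/
noncomputable def lap (θ : ℝ) (φ : ℝ → ℝ) (ξ : ℝ) : ℝ :=
  φ (ξ + Real.sin θ) + φ (ξ - Real.sin θ) + φ (ξ + Real.cos θ) + φ (ξ - Real.cos θ) - 4 * φ ξ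

private lemma expMulIic {b : ℝ} (hb : 0 < b) :
    MeasureTheory.IntegrableOn (fun x : ℝ => Real.exp (b * x)) (Set.Iic (0:ℝ)) := by
  apply integrableOn_Iic_of_intervalIntegral_norm_bounded (1/b) 0
      (fun i : ℝ => ((Real.continuous_exp.comp (continuous_const.mul continuous_id)).integrableOn_Ioc))
      tendsto_id
  filter_upwards with i
  simp only [Real.norm_eq_abs, Real.abs_exp, Function.comp, Pi.mul_apply, id_eq]
  rw [intervalIntegral.integral_comp_mul_left (fun x => Real.exp x) (ne_of_gt hb)]
  rw [integral_exp, smul_eq_mul, mul_zero, Real.exp_zero, one_div]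
  have h2 : Real.exp (b * i) > 0 := Real.exp_pos _
  calc b⁻¹ * (1 - Real.exp (b*i)) ≤ b⁻¹ * 1 := by
        apply mul_le_mul_of_nonneg_left _ (inv_nonneg.2 hb.le); linarith
    _ = b⁻¹ := mul_one _

theorem stmt_19 (Λ β α μ₁ μ₂ d₂ θ c : ℝ)
    (hΛ : 0 < Λ) (hβ : 0 < β) (hα : 0 < α) (hμ₁ : 0 < μ₁) (hμ₂ : 0 < μ₂)
    (hd₂ : 0 < d₂) (hc : 0 < c)
    (S₀ : ℝ) (hS₀ : S₀ = Λ / μ₁)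
    (S I : ℝ → ℝ) (hIC1 : ContDiff ℝ 1 I)
    (hIpos : ∀ ξ : ℝ, 0 < I ξ) (hSpos : ∀ ξ : ℝ, 0 < S ξ)
    (hIbdd : ∃ B : ℝ, ∀ ξ : ℝ, I ξ ≤ B)
    (hIeq : ∀ ξ : ℝ, c * deriv I ξ =
      d₂ * lap θ I ξ + β * S ξ * I ξ / (1 + α * I ξ) - μ₂ * I ξ)
    (μ₀ : ℝ) (hμ₀ : 0 < μ₀)
    (hIgrow : ∃ K : ℝ, ∀ ξ : ℝ, Real.exp (-μ₀ * ξ) * I ξ ≤ K)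
    (hI'grow : ∃ K : ℝ, ∀ ξ : ℝ, Real.exp (-μ₀ * ξ) * |deriv I ξ| ≤ K) :
    ∀ lam : ℝ, 0 < lam → lam < μ₀ →
      MeasureTheory.Integrable (fun ξ : ℝ => Real.exp (-lam * ξ) * I ξ) ∧
      MeasureTheory.Integrable (fun ξ : ℝ =>
        Real.exp (-lam * ξ) * (β * S₀ * I ξ - β * S ξ * I ξ / (1 + α * I ξ))) ∧
      charDelta d₂ β S₀ μ₂ θ c lam * (∫ ξ : ℝ, Real.exp (-lam * ξ) * I ξ) =
        ∫ ξ : ℝ, Real.exp (-lam * ξ) * (β * S₀ * I ξ - β * S ξ * I ξ / (1 + α * I ξ)) := by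
  intro lam hl1 hl2
  obtain ⟨B, hB⟩ := hIbdd
  obtain ⟨K, hK⟩ := hIgrow
  have hIc : Continuous I := hIC1.continuous
  have hI'c : Continuous (deriv I) := hIC1.continuous_deriv le_rfl
  have hIdiff : ∀ x : ℝ, HasDerivAt I (deriv I x) x :=
    fun x => (hIC1.differentiable one_ne_zero x).hasDerivAt
  set E : ℝ → ℝ := fun ξ => Real.exp (-lam * ξ) with hE
  have hEc : Continuous E := Real.continuous_exp.comp (continuous_const.mul continuous_id)
  have hEpos : ∀ ξ, 0 < E ξ := fun ξ => Real.exp_pos _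
  have hEderiv : ∀ x : ℝ, HasDerivAt E (-lam * E x) x := by
    intro x
    have h := ((hasDerivAt_id x).const_mul (-lam)).exp
    simpa [hE, mul_comm] using h
  have hFnn : ∀ ξ, 0 ≤ E ξ * I ξ := fun ξ => mul_nonneg (hEpos ξ).le (hIpos ξ).le
  have hFc : Continuous (fun ξ => E ξ * I ξ) := hEc.mul hIc
  have hB0 : (0:ℝ) ≤ B := le_trans (hIpos 0).le (hB 0)
  have hK0 : (0:ℝ) ≤ K := le_trans (mul_nonneg (Real.exp_pos _).le (hIpos 0).le) (hK 0)
  -- bounds on F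
  have hFle1 : ∀ ξ, E ξ * I ξ ≤ K * Real.exp ((μ₀ - lam) * ξ) := by
    intro ξ
    have key : E ξ * I ξ = Real.exp ((μ₀ - lam) * ξ) * (Real.exp (-μ₀ * ξ) * I ξ) := by
      show Real.exp (-lam * ξ) * I ξ = _
      rw [← mul_assoc, ← Real.exp_add]
      have : (μ₀ - lam) * ξ + -μ₀ * ξ = -lam * ξ := by ring
      rw [this]
    rw [key]
    calc Real.exp ((μ₀ - lam) * ξ) * (Real.exp (-μ₀ * ξ) * I ξ)
        ≤ Real.exp ((μ₀ - lam) * ξ) * K :=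
          mul_le_mul_of_nonneg_left (hK ξ) (Real.exp_pos _).le
      _ = K * Real.exp ((μ₀ - lam) * ξ) := mul_comm _ _
  have hFle2 : ∀ ξ, E ξ * I ξ ≤ B * E ξ := by
    intro ξ
    calc E ξ * I ξ ≤ E ξ * B := mul_le_mul_of_nonneg_left (hB ξ) (hEpos ξ).le
      _ = B * E ξ := mul_comm _ _
  -- integrability of F
  have hF : Integrable (fun ξ => E ξ * I ξ) := by
    have h1 : IntegrableOn (fun ξ => E ξ * I ξ) (Iic 0) := by
      apply Integrable.mono' ((expMulIic (sub_pos.2 hl2)).const_mul K)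
        hFc.aestronglyMeasurable.restrict
      filter_upwards with ξ
      rw [Real.norm_of_nonneg (hFnn ξ)]
      exact hFle1 ξ
    have h2 : IntegrableOn (fun ξ => E ξ * I ξ) (Ioi 0) := by
      apply Integrable.mono' ((exp_neg_integrableOn_Ioi 0 hl1).const_mul B)
        hFc.aestronglyMeasurable.restrict
      filter_upwards with ξ
      rw [Real.norm_of_nonneg (hFnn ξ)]
      exact hFle2 ξ
    rw [← integrableOn_univ, ← Iic_union_Ioi (a := (0:ℝ))]
    exact h1.union h2
  set M : ℝ := ∫ ξ, E ξ * I ξ with hM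
  have hMnn : 0 ≤ M := integral_nonneg hFnn
  -- shifts
  have hkey : ∀ s ξ : ℝ, E ξ * I (ξ + s) = Real.exp (lam * s) * (E (ξ + s) * I (ξ + s)) := by
    intro s ξ
    show Real.exp (-lam * ξ) * I (ξ + s) = Real.exp (lam * s) * (Real.exp (-lam * (ξ + s)) * I (ξ + s))
    rw [← mul_assoc, ← Real.exp_add]
    have : lam * s + -lam * (ξ + s) = -lam * ξ := by ring
    rw [this]
  have hshiftInt : ∀ s : ℝ, Integrable (fun ξ => E ξ * I (ξ + s)) := by
    intro s
    exact ((hF.comp_add_right s).const_mul (Real.exp (lam * s))).congr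
      (Eventually.of_forall fun ξ => (hkey s ξ).symm)
  have hshiftVal : ∀ s : ℝ, (∫ ξ, E ξ * I (ξ + s)) = Real.exp (lam * s) * M := by
    intro s
    calc (∫ ξ, E ξ * I (ξ + s))
        = ∫ ξ, Real.exp (lam * s) * (E (ξ + s) * I (ξ + s)) := by
          exact integral_congr_ae (Eventually.of_forall fun ξ => hkey s ξ)
      _ = Real.exp (lam * s) * ∫ ξ, E (ξ + s) * I (ξ + s) := integral_const_mul _ _
      _ = Real.exp (lam * s) * M := by
          rw [integral_add_right_eq_self (fun ξ => E ξ * I ξ) s]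
  -- laplacian
  have hlapc : Continuous (lap θ I) := by
    unfold lap
    fun_prop
  have hlapEq : ∀ ξ, E ξ * lap θ I ξ =
      E ξ * I (ξ + Real.sin θ) + E ξ * I (ξ + -Real.sin θ) + E ξ * I (ξ + Real.cos θ) +
        E ξ * I (ξ + -Real.cos θ) - 4 * (E ξ * I ξ) := by
    intro ξ
    simp only [lap, ← sub_eq_add_neg]
    ring
  have hlapInt : Integrable (fun ξ => E ξ * lap θ I ξ) := by
    exact (((((hshiftInt (Real.sin θ)).add (hshiftInt (-Real.sin θ))).add
      (hshiftInt (Real.cos θ))).add (hshiftInt (-Real.cos θ))).sub (hF.const_mul 4)).congr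
      (Eventually.of_forall fun ξ => (hlapEq ξ).symm)
  set Sig : ℝ := Real.exp (lam * Real.sin θ) + Real.exp (-(lam * Real.sin θ)) +
      Real.exp (lam * Real.cos θ) + Real.exp (-(lam * Real.cos θ)) - 4 with hSig
  have hlapVal : (∫ ξ, E ξ * lap θ I ξ) = Sig * M := by
    have A1 : Integrable (fun ξ => E ξ * I (ξ + Real.sin θ) + E ξ * I (ξ + -Real.sin θ)) :=
      (hshiftInt (Real.sin θ)).add (hshiftInt (-Real.sin θ))
    have A2 : Integrable (fun ξ => E ξ * I (ξ + Real.sin θ) + E ξ * I (ξ + -Real.sin θ)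
        + E ξ * I (ξ + Real.cos θ)) := A1.add (hshiftInt (Real.cos θ))
    have A3 : Integrable (fun ξ => E ξ * I (ξ + Real.sin θ) + E ξ * I (ξ + -Real.sin θ)
        + E ξ * I (ξ + Real.cos θ) + E ξ * I (ξ + -Real.cos θ)) :=
      A2.add (hshiftInt (-Real.cos θ))
    have A4 : Integrable (fun ξ => 4 * (E ξ * I ξ)) := hF.const_mul 4
    rw [integral_congr_ae (Eventually.of_forall hlapEq)]
    rw [integral_sub A3 A4]
    rw [integral_add A2 (hshiftInt (-Real.cos θ))]
    rw [integral_add A1 (hshiftInt (Real.cos θ))]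
    rw [integral_add (hshiftInt (Real.sin θ)) (hshiftInt (-Real.sin θ))]
    rw [hshiftVal, hshiftVal, hshiftVal, hshiftVal, integral_const_mul]
    have e1 : lam * -Real.sin θ = -(lam * Real.sin θ) := by ring
    have e2 : lam * -Real.cos θ = -(lam * Real.cos θ) := by ring
    rw [e1, e2, hSig]
    ring
  -- the function h
  set H : ℝ → ℝ := fun ξ => c * deriv I ξ + μ₂ * I ξ - d₂ * lap θ I ξ with hH
  have hT : ∀ ξ, β * S ξ * I ξ / (1 + α * I ξ) = H ξ := by
    intro ξ
    show _ = c * deriv I ξ + μ₂ * I ξ - d₂ * lap θ I ξ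
    linarith [hIeq ξ]
  have hHpos : ∀ ξ, 0 ≤ H ξ := by
    intro ξ
    rw [← hT ξ]
    apply div_nonneg (mul_nonneg (mul_nonneg hβ.le (hSpos ξ).le) (hIpos ξ).le)
    nlinarith [hIpos ξ]
  have hHc : Continuous H := by
    apply Continuous.sub
    · exact (continuous_const.mul hI'c).add (continuous_const.mul hIc)
    · exact continuous_const.mul hlapc
  -- integrability of E * H
  set M₂ : ℝ := ∫ ξ, ‖E ξ * lap θ I ξ‖ with hM₂
  have hEHInt : Integrable (fun ξ => E ξ * H ξ) := by
    apply integrable_of_intervalIntegral_norm_bounded (μ := volume) (l := atTop)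
      (a := fun i : ℝ => -i) (b := fun i : ℝ => i)
      (c * B + c * lam * M + μ₂ * M + d₂ * M₂)
      (fun i => (hEc.mul hHc).integrableOn_Ioc) tendsto_neg_atTop_atBot tendsto_id
    filter_upwards [eventually_ge_atTop (0:ℝ)] with i hi
    have hii : -i ≤ i := by linarith
    have hnorm : ∀ x : ℝ, ‖E x * H x‖ = E x * H x :=
      fun x => Real.norm_of_nonneg (mul_nonneg (hEpos x).le (hHpos x))
    simp only [Pi.mul_apply, hnorm]
    have i1 : IntervalIntegrable (fun x => E x * I x) volume (-i) i :=
      (hEc.mul hIc).intervalIntegrable _ _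
    have i2 : IntervalIntegrable (fun x => E x * deriv I x) volume (-i) i :=
      (hEc.mul hI'c).intervalIntegrable _ _
    have i3 : IntervalIntegrable (fun x => E x * lap θ I x) volume (-i) i :=
      (hEc.mul hlapc).intervalIntegrable _ _
    have hsplit : (∫ x in (-i)..i, E x * H x) =
        c * (∫ x in (-i)..i, E x * deriv I x) + μ₂ * (∫ x in (-i)..i, E x * I x)
          - d₂ * (∫ x in (-i)..i, E x * lap θ I x) := by
      have hpt : ∀ x ∈ uIcc (-i) i, E x * H x =
          c * (E x * deriv I x) + μ₂ * (E x * I x) - d₂ * (E x * lap θ I x) := by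
        intro x _
        show E x * (c * deriv I x + μ₂ * I x - d₂ * lap θ I x) = _
        ring
      rw [intervalIntegral.integral_congr hpt]
      rw [intervalIntegral.integral_sub ((i2.const_mul c).add (i1.const_mul μ₂))
        (i3.const_mul d₂)]
      rw [intervalIntegral.integral_add (i2.const_mul c) (i1.const_mul μ₂)]
      rw [intervalIntegral.integral_const_mul, intervalIntegral.integral_const_mul,
        intervalIntegral.integral_const_mul]
    have hparts : (∫ x in (-i)..i, E x * deriv I x) =
        E i * I i - E (-i) * I (-i) + lam * ∫ x in (-i)..i, E x * I x := by
      have hibp := intervalIntegral.integral_mul_deriv_eq_deriv_mul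
        (u := E) (v := I) (u' := fun x => -lam * E x) (v' := deriv I) (a := -i) (b := i)
        (fun x _ => hEderiv x) (fun x _ => hIdiff x)
        ((continuous_const.mul hEc).intervalIntegrable _ _)
        (hI'c.intervalIntegrable _ _)
      rw [hibp]
      have : (∫ x in (-i)..i, (-lam * E x) * I x) = -lam * ∫ x in (-i)..i, E x * I x := by
        rw [← intervalIntegral.integral_const_mul]
        apply intervalIntegral.integral_congr
        intro x _
        ring
      rw [this]
      ring
    -- bounds
    have b1 : E i * I i ≤ B := by
      have hE1 : E i ≤ 1 := by
        apply Real.exp_le_one_iff.2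
        nlinarith
      calc E i * I i ≤ 1 * B := mul_le_mul hE1 (hB i) (hIpos i).le zero_le_one
        _ = B := one_mul _
    have b2 : 0 ≤ E (-i) * I (-i) := hFnn _
    have b3a : 0 ≤ ∫ x in (-i)..i, E x * I x := by
      rw [intervalIntegral.integral_of_le hii]
      exact setIntegral_nonneg measurableSet_Ioc fun x _ => hFnn x
    have b3b : (∫ x in (-i)..i, E x * I x) ≤ M := by
      rw [intervalIntegral.integral_of_le hii]
      exact setIntegral_le_integral hF (Eventually.of_forall hFnn)
    have b4 : |∫ x in (-i)..i, E x * lap θ I x| ≤ M₂ := by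
      have h1 : |∫ x in (-i)..i, E x * lap θ I x| ≤ ∫ x in (-i)..i, ‖E x * lap θ I x‖ := by
        rw [← Real.norm_eq_abs]
        exact intervalIntegral.norm_integral_le_integral_norm hii
      apply le_trans h1
      rw [intervalIntegral.integral_of_le hii]
      exact setIntegral_le_integral hlapInt.norm (Eventually.of_forall fun x => norm_nonneg _)
    rw [hsplit, hparts]
    have habs := abs_le.1 b4
    have e1 : c * (E i * I i) ≤ c * B := mul_le_mul_of_nonneg_left b1 hc.le
    have e2 : c * lam * (∫ x in (-i)..i, E x * I x) ≤ c * lam * M :=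
      mul_le_mul_of_nonneg_left b3b (by positivity)
    have e3 : μ₂ * (∫ x in (-i)..i, E x * I x) ≤ μ₂ * M :=
      mul_le_mul_of_nonneg_left b3b hμ₂.le
    have e4 : d₂ * (-(∫ x in (-i)..i, E x * lap θ I x)) ≤ d₂ * M₂ :=
      mul_le_mul_of_nonneg_left (by linarith [habs.1]) hd₂.le
    nlinarith [mul_nonneg hc.le b2]
  -- integrability of E * deriv I
  have hEI'Int : Integrable (fun ξ => E ξ * deriv I ξ) := by
    have key : ∀ ξ, E ξ * deriv I ξ =
        c⁻¹ * (E ξ * H ξ - μ₂ * (E ξ * I ξ) + d₂ * (E ξ * lap θ I ξ)) := by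
      intro ξ
      show E ξ * deriv I ξ =
        c⁻¹ * (E ξ * (c * deriv I ξ + μ₂ * I ξ - d₂ * lap θ I ξ)
          - μ₂ * (E ξ * I ξ) + d₂ * (E ξ * lap θ I ξ))
      field_simp
      ring
    exact (((hEHInt.sub (hF.const_mul μ₂)).add (hlapInt.const_mul d₂)).const_mul c⁻¹).congr
      (Eventually.of_forall fun ξ => (key ξ).symm)
  -- limits of F at ±∞
  have htop : Tendsto (fun ξ => E ξ * I ξ) atTop (nhds 0) := by
    have hg : Tendsto (fun ξ : ℝ => B * E ξ) atTop (nhds 0) := by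
      have h1 : Tendsto (fun ξ : ℝ => -lam * ξ) atTop atBot :=
        Tendsto.const_mul_atTop_of_neg (by linarith) tendsto_id
      have h2 : Tendsto E atTop (nhds 0) := by exact Real.tendsto_exp_atBot.comp h1
      have h3 := h2.const_mul B
      rw [mul_zero] at h3
      exact h3
    exact squeeze_zero hFnn hFle2 hg
  have hbot : Tendsto (fun ξ => E ξ * I ξ) atBot (nhds 0) := by
    have hg : Tendsto (fun ξ : ℝ => K * Real.exp ((μ₀ - lam) * ξ)) atBot (nhds 0) := by
      have h1 : Tendsto (fun ξ : ℝ => (μ₀ - lam) * ξ) atBot atBot :=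
        Tendsto.const_mul_atBot (by linarith) tendsto_id
      have h2 : Tendsto (fun ξ : ℝ => Real.exp ((μ₀ - lam) * ξ)) atBot (nhds 0) :=
        Real.tendsto_exp_atBot.comp h1
      have h3 := h2.const_mul K
      rw [mul_zero] at h3
      exact h3
    exact squeeze_zero hFnn hFle1 hg
  -- integral of E * deriv I
  have hEI'val : (∫ ξ, E ξ * deriv I ξ) = lam * M := by
    have hderivF : ∀ ξ : ℝ, HasDerivAt (fun ξ => E ξ * I ξ)
        (-lam * (E ξ * I ξ) + E ξ * deriv I ξ) ξ := by
      intro ξ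
      have : HasDerivAt (fun ξ => E ξ * I ξ) (-lam * E ξ * I ξ + E ξ * deriv I ξ) ξ :=
        (hEderiv ξ).mul (hIdiff ξ)
      convert this using 1
      ring
    have hz : (∫ ξ, (-lam * (E ξ * I ξ) + E ξ * deriv I ξ)) = 0 - 0 :=
      integral_of_hasDerivAt_of_tendsto hderivF ((hF.const_mul (-lam)).add hEI'Int) hbot htop
    rw [integral_add (hF.const_mul (-lam)) hEI'Int, integral_const_mul] at hz
    rw [← hM] at hz
    linarith
  -- integral of E * H
  have hEHval : (∫ ξ, E ξ * H ξ) = c * (lam * M) + μ₂ * M - d₂ * (Sig * M) := by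
    have hpt : ∀ ξ, E ξ * H ξ =
        c * (E ξ * deriv I ξ) + μ₂ * (E ξ * I ξ) - d₂ * (E ξ * lap θ I ξ) := by
      intro ξ
      show E ξ * (c * deriv I ξ + μ₂ * I ξ - d₂ * lap θ I ξ) = _
      ring
    have C1 : Integrable (fun ξ => c * (E ξ * deriv I ξ)) := hEI'Int.const_mul c
    have C2 : Integrable (fun ξ => μ₂ * (E ξ * I ξ)) := hF.const_mul μ₂
    have C12 : Integrable (fun ξ => c * (E ξ * deriv I ξ) + μ₂ * (E ξ * I ξ)) := C1.add C2
    have C3 : Integrable (fun ξ => d₂ * (E ξ * lap θ I ξ)) := hlapInt.const_mul d₂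
    rw [integral_congr_ae (Eventually.of_forall hpt)]
    rw [integral_sub C12 C3]
    rw [integral_add C1 C2]
    rw [integral_const_mul, integral_const_mul, integral_const_mul]
    rw [hEI'val, hlapVal, ← hM]
  -- final
  have hgEq : ∀ ξ, Real.exp (-lam * ξ) * (β * S₀ * I ξ - β * S ξ * I ξ / (1 + α * I ξ)) =
      β * S₀ * (E ξ * I ξ) - E ξ * H ξ := by
    intro ξ
    rw [hT ξ]
    show Real.exp (-lam * ξ) * (β * S₀ * I ξ - H ξ) = β * S₀ * (Real.exp (-lam * ξ) * I ξ) - Real.exp (-lam * ξ) * H ξ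
    ring
  have hgInt : Integrable (fun ξ : ℝ =>
      Real.exp (-lam * ξ) * (β * S₀ * I ξ - β * S ξ * I ξ / (1 + α * I ξ))) := by
    exact ((hF.const_mul (β * S₀)).sub hEHInt).congr
      (Eventually.of_forall fun ξ => (hgEq ξ).symm)
  refine ⟨hF, hgInt, ?_⟩
  have hRHS : (∫ ξ : ℝ, Real.exp (-lam * ξ) * (β * S₀ * I ξ - β * S ξ * I ξ / (1 + α * I ξ)))
      = β * S₀ * M - (c * (lam * M) + μ₂ * M - d₂ * (Sig * M)) := by
    rw [integral_congr_ae (Eventually.of_forall hgEq)]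
    rw [integral_sub (hF.const_mul (β * S₀)) hEHInt]
    rw [integral_const_mul, hEHval, ← hM]
  rw [hRHS]
  show charDelta d₂ β S₀ μ₂ θ c lam * M = _
  rw [charDelta, hSig]
  ring
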